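/- For the 2D egg-shaped state space (boundary consisting of the half-circle {(r cos α, r sin α) : α ∈ [−π/2, π/2]} and the half-ellipse {(−R cos β, r sin β) : β ∈ [−π/2, π/2]}, with r, R > 0), every point of the convex region bounded by this curve lies on some chord connecting two boundary points at which the tangent lines are parallel; i.e., for every interior point w there exist an angle α and p ∈ [0,1] with w = p(r cos α, r sin α) + (1−p)(−R cos β(α), r sin β(α)), where β(α) = arccot(−(R/r)cot α). -/

import Mathlib

open Real

/-- The angle `β(α) = arccot(−(R/r) cot α)` (with the conventions `β(0) = 0`,
`β(±π/2) = ∓π/2`) selecting the boundary point with tangent parallel to the tangent at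
angle `α`; for `α ∈ (−π/2, π/2)` it equals `arctan(−(r/R) tan α)`. -/
noncomputable def betaFun (r R α : ℝ) : ℝ :=
  if α = π / 2 then -(π / 2)
  else if α = -(π / 2) then π / 2
  else arctan (-(r / R) * tan α)

/-- The boundary curve of the 2D egg: a right half-circle of radius `r` and a left
half-ellipse with semi-axes `R` and `r`. -/
def eggCurve (r R : ℝ) : Set (ℝ × ℝ) :=
  ((fun α => ((r * cos α, r * sin α) : ℝ × ℝ)) '' Set.Icc (-(π / 2)) (π / 2)) ∪
  ((fun β => ((-R * cos β, r * sin β) : ℝ × ℝ)) '' Set.Icc (-(π / 2)) (π / 2))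

/-- Auxiliary: the normalizing factor `D(α) = √(R² cos²α + r² sin²α)`. -/
noncomputable def Dfun (r R α : ℝ) : ℝ := Real.sqrt (R ^ 2 * cos α ^ 2 + r ^ 2 * sin α ^ 2)

lemma Dfun_sq (r R α : ℝ) : Dfun r R α ^ 2 = R ^ 2 * cos α ^ 2 + r ^ 2 * sin α ^ 2 :=
  Real.sq_sqrt (by positivity)

lemma Dfun_pos {r R : ℝ} (hr : 0 < r) (hR : 0 < R) (α : ℝ) : 0 < Dfun r R α := by
  apply Real.sqrt_pos.mpr
  rcases le_total (r ^ 2) (R ^ 2) with h | h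
  · nlinarith [sin_sq_add_cos_sq α, sq_nonneg (cos α), sq_nonneg (sin α), mul_pos hr hr]
  · nlinarith [sin_sq_add_cos_sq α, sq_nonneg (cos α), sq_nonneg (sin α), mul_pos hR hR]

lemma Dfun_cont (r R : ℝ) : Continuous (Dfun r R) := by
  unfold Dfun; fun_prop

lemma Dfun_pi_div_two {r R : ℝ} (hr : 0 < r) : Dfun r R (π / 2) = r := by
  unfold Dfun
  simp [Real.cos_pi_div_two, Real.sin_pi_div_two]
  exact Real.sqrt_sq hr.le

lemma Dfun_neg_pi_div_two {r R : ℝ} (hr : 0 < r) : Dfun r R (-(π / 2)) = r := by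
  unfold Dfun
  simp [Real.cos_pi_div_two, Real.sin_pi_div_two]
  exact Real.sqrt_sq hr.le

/-- The key reparametrization: the opposite boundary point is `(−R²cos α, −r²sin α)/D`. -/
lemma betaFun_cos_sin {r R : ℝ} (hr : 0 < r) (hR : 0 < R) {α : ℝ}
    (hα : α ∈ Set.Icc (-(π / 2)) (π / 2)) :
    cos (betaFun r R α) = R * cos α / Dfun r R α ∧
    sin (betaFun r R α) = -(r * sin α) / Dfun r R α := by
  rcases eq_or_ne α (π / 2) with h1 | h1
  · subst h1
    rw [betaFun, if_pos rfl, Dfun_pi_div_two hr]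
    constructor
    · simp
    · simp
      field_simp
  rcases eq_or_ne α (-(π / 2)) with h2 | h2
  · subst h2
    rw [betaFun, if_neg h1, if_pos rfl, Dfun_neg_pi_div_two hr]
    constructor
    · simp
    · simp
      field_simp
  · have hc : 0 < cos α := by
      apply Real.cos_pos_of_mem_Ioo
      exact ⟨lt_of_le_of_ne hα.1 (Ne.symm h2), lt_of_le_of_ne hα.2 h1⟩
    have hD : 0 < Dfun r R α := Dfun_pos hr hR α
    have hRc : 0 < R * cos α := by positivity
    have hsq : Real.sqrt (1 + (-(r / R) * tan α) ^ 2) = Dfun r R α / (R * cos α) := by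
      have h1' : 1 + (-(r / R) * tan α) ^ 2
          = (R ^ 2 * cos α ^ 2 + r ^ 2 * sin α ^ 2) / (R * cos α) ^ 2 := by
        rw [Real.tan_eq_sin_div_cos]
        field_simp
      rw [h1', Real.sqrt_div (by positivity), Real.sqrt_sq hRc.le]
      rfl
    rw [betaFun, if_neg h1, if_neg h2, Real.cos_arctan, Real.sin_arctan, hsq]
    constructor
    · field_simp
    · rw [Real.tan_eq_sin_div_cos]
      field_simp

/-- Collinearity decomposition (cleared of denominators). -/
lemma collinear_decomp (a1 a2 c1 c2 n1 n2 : ℝ) (hcross : a1 * c2 = a2 * c1) :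
    a1 * (n1 * c1 + n2 * c2) = (n1 * a1 + n2 * a2) * c1 ∧
    a2 * (n1 * c1 + n2 * c2) = (n1 * a1 + n2 * a2) * c2 := by
  constructor
  · linear_combination n2 * hcross
  · linear_combination (-n1) * hcross

/-- Upper support bound: the curve lies in the half plane `cos α·v₁ + sin α·v₂ ≤ r`. -/
lemma egg_upper {r R : ℝ} (hr : 0 < r) (hR : 0 < R) {α : ℝ}
    (hα : α ∈ Set.Icc (-(π / 2)) (π / 2)) :
    ∀ v ∈ eggCurve r R, cos α * v.1 + sin α * v.2 ≤ r := by
  have hcα : 0 ≤ cos α := Real.cos_nonneg_of_mem_Icc hα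
  rintro v (⟨t, ht, rfl⟩ | ⟨t, ht, rfl⟩)
  · simp only
    nlinarith [Real.cos_le_one (α - t), Real.cos_sub α t, hr.le]
  · have hct : 0 ≤ cos t := Real.cos_nonneg_of_mem_Icc ht
    simp only
    have h1 : sin α * sin t ≤ 1 := by
      nlinarith [Real.sin_le_one α, Real.neg_one_le_sin α, Real.sin_le_one t,
        Real.neg_one_le_sin t]
    have h2 : sin α * (r * sin t) ≤ r := by nlinarith
    nlinarith [mul_nonneg (mul_nonneg hR.le hcα) hct]

/-- Lower support bound: the curve lies in the half plane `−D ≤ cos α·v₁ + sin α·v₂`. -/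
lemma egg_lower {r R : ℝ} (hr : 0 < r) (hR : 0 < R) {α : ℝ}
    (hα : α ∈ Set.Icc (-(π / 2)) (π / 2)) :
    ∀ v ∈ eggCurve r R, -(Dfun r R α) ≤ cos α * v.1 + sin α * v.2 := by
  have hcα : 0 ≤ cos α := Real.cos_nonneg_of_mem_Icc hα
  have hD : 0 < Dfun r R α := Dfun_pos hr hR α
  have hDsq := Dfun_sq r R α
  rintro v (⟨t, ht, rfl⟩ | ⟨t, ht, rfl⟩)
  · have hct : 0 ≤ cos t := Real.cos_nonneg_of_mem_Icc ht
    simp only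
    have h1 : (r * sin α) ^ 2 ≤ Dfun r R α ^ 2 := by nlinarith [sq_nonneg (R * cos α)]
    have h2 : r * sin α ≤ Dfun r R α := by nlinarith
    have h3 : -(Dfun r R α) ≤ r * sin α := by nlinarith
    nlinarith [mul_nonneg (mul_nonneg hr.le hcα) hct, Real.sin_le_one t,
      Real.neg_one_le_sin t]
  · simp only
    have key : (R * cos α * cos t - r * sin α * sin t) ^ 2 ≤ Dfun r R α ^ 2 := by
      nlinarith [sq_nonneg (R * cos α * sin t + r * sin α * cos t), sin_sq_add_cos_sq t]
    nlinarith

/-- Weak spectrality of the 2D egg state space: every point of the convex region bounded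
by the egg curve lies on a chord connecting two boundary points with parallel tangents. -/
theorem egg_weak_spectrality {r R : ℝ} (hr : 0 < r) (hR : 0 < R) :
    ∀ w ∈ convexHull ℝ (eggCurve r R),
      ∃ α ∈ Set.Icc (-(π / 2)) (π / 2), ∃ p ∈ Set.Icc (0 : ℝ) 1,
        w = p • ((r * cos α, r * sin α) : ℝ × ℝ) +
            (1 - p) • ((-R * cos (betaFun r R α), r * sin (betaFun r R α)) : ℝ × ℝ) := by
  rintro ⟨x, y⟩ hw
  set F : ℝ → ℝ := fun α =>
    (r * cos α - x) * (-(r ^ 2 * sin α) - y * Dfun r R α) -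
    (r * sin α - y) * (-(R ^ 2 * cos α) - x * Dfun r R α) with hF
  have hDc : Continuous (Dfun r R) := Dfun_cont r R
  have hFcont : Continuous F := by
    apply Continuous.sub
    · exact ((continuous_const.mul Real.continuous_cos).sub continuous_const).mul
        (((continuous_const.mul Real.continuous_sin).neg).sub (continuous_const.mul hDc))
    · exact ((continuous_const.mul Real.continuous_sin).sub continuous_const).mul
        (((continuous_const.mul Real.continuous_cos).neg).sub (continuous_const.mul hDc))
  have hFpi : F (π / 2) = 2 * x * r ^ 2 := by
    simp only [hF, Real.cos_pi_div_two, Real.sin_pi_div_two, Dfun_pi_div_two hr]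
    ring
  have hFnpi : F (-(π / 2)) = -(2 * x * r ^ 2) := by
    simp only [hF, Real.cos_neg, Real.sin_neg, Real.cos_pi_div_two, Real.sin_pi_div_two,
      Dfun_neg_pi_div_two hr]
    ring
  have hpi2 : -(π / 2) ≤ π / 2 := by linarith [Real.pi_pos]
  obtain ⟨α, hαI, hα0⟩ : ∃ α ∈ Set.Icc (-(π / 2)) (π / 2), F α = 0 := by
    rcases le_total 0 x with hx | hx
    · have h0 : (0 : ℝ) ∈ Set.Icc (F (-(π / 2))) (F (π / 2)) := by
        rw [hFpi, hFnpi]; constructor <;> nlinarith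
      obtain ⟨α, hαI, hv⟩ := intermediate_value_Icc hpi2 hFcont.continuousOn h0
      exact ⟨α, hαI, hv⟩
    · have h0 : (0 : ℝ) ∈ Set.Icc (F (π / 2)) (F (-(π / 2))) := by
        rw [hFpi, hFnpi]; constructor <;> nlinarith
      obtain ⟨α, hαI, hv⟩ := intermediate_value_Icc' hpi2 hFcont.continuousOn h0
      exact ⟨α, hαI, hv⟩
  have hDpos : 0 < Dfun r R α := Dfun_pos hr hR α
  have hDsq : Dfun r R α ^ 2 = R ^ 2 * cos α ^ 2 + r ^ 2 * sin α ^ 2 := Dfun_sq r R α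
  have hpyth : sin α ^ 2 + cos α ^ 2 = 1 := sin_sq_add_cos_sq α
  set c := cos α with hc
  set s := sin α with hs
  set D := Dfun r R α with hD
  -- support bounds for w
  have hlin : IsLinearMap ℝ (fun v : ℝ × ℝ => c * v.1 + s * v.2) := by
    constructor
    · intro a b; simp only [Prod.fst_add, Prod.snd_add]; ring
    · intro k a; simp only [Prod.smul_fst, Prod.smul_snd, smul_eq_mul]; ring
  have hu_le : c * x + s * y ≤ r := by
    exact convexHull_min (egg_upper hr hR hαI) (convex_halfSpace_le hlin r) hw
  have hu_ge : -D ≤ c * x + s * y := by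
    exact convexHull_min (egg_lower hr hR hαI) (convex_halfSpace_ge hlin (-D)) hw
  -- set up the chord decomposition
  have hα0' : (r * c - x) * (-(r ^ 2 * s) - y * D) -
      (r * s - y) * (-(R ^ 2 * c) - x * D) = 0 := hα0
  have hcross : (x - r * c) * (-(r ^ 2 * s) - D * (r * s))
      = (y - r * s) * (-(R ^ 2 * c) - D * (r * c)) := by
    linear_combination -hα0'
  obtain ⟨ha1, ha2⟩ := collinear_decomp (x - r * c) (y - r * s)
    (-(R ^ 2 * c) - D * (r * c)) (-(r ^ 2 * s) - D * (r * s)) c s hcross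
  have hnc : c * (-(R ^ 2 * c) - D * (r * c)) + s * (-(r ^ 2 * s) - D * (r * s))
      = -(D ^ 2) - D * r := by
    linear_combination hDsq - D * r * hpyth
  rw [hnc] at ha1 ha2
  have hnum : c * (x - r * c) + s * (y - r * s) = c * x + s * y - r := by
    linear_combination -r * hpyth
  rw [hnum] at ha1 ha2
  refine ⟨α, hαI, (c * x + s * y + D) / (r + D), ⟨?_, ?_⟩, ?_⟩
  · apply div_nonneg <;> linarith
  · rw [div_le_one (by linarith)]; linarith
  · obtain ⟨hcos, hsin⟩ := betaFun_cos_sin hr hR hαI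
    rw [hcos, hsin, ← hc, ← hs, ← hD]
    simp only [Prod.smul_mk, smul_eq_mul, Prod.mk_add_mk, Prod.mk.injEq]
    constructor
    · field_simp
      linear_combination (-1) * ha1
    · field_simp
      linear_combination (-1) * ha2
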